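/- arXiv:2509.25507 — 2 statements merged into one kernel-verified Lean document; each statement's English description precedes it below -/
import Mathlib

section
/- Let $X_1, \ldots, X_n$ be points in $\mathbb{R}^d$ in general position (all pairwise distances distinct), and let $G$ be the directed $k$-nearest neighbor graph (each vertex has out-degree exactly $k$). Then there exists a constant $C_d$ depending only on $d$ such that the in-degree of every vertex in $G$ is at most $C_d \, k$; consequently the total degree (in-degree plus out-degree) of every vertex is at most $(C_d + 1)k$. -/
open Finset

/-- Directed `k`-nearest-neighbor edge relation: `i → j` iff `j ≠ i` and `j` is among
the `k` nearest points to `X i` (i.e. at most `k` points `l ≠ i` are at distance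
`≤ dist (X i) (X j)` from `X i`). -/
noncomputable def knnEdge {n d : ℕ} (X : Fin n → EuclideanSpace ℝ (Fin d)) (k : ℕ)
    (i j : Fin n) : Prop :=
  i ≠ j ∧
    (Finset.univ.filter fun l =>
      l ≠ i ∧ dist (X i) (X l) ≤ dist (X i) (X j)).card ≤ k

noncomputable instance {n d : ℕ} (X : Fin n → EuclideanSpace ℝ (Fin d)) (k : ℕ) :
    DecidableRel (knnEdge X k) := fun _ _ => Classical.propDecidable _

open Finset

-- covering lemma
lemma my_net (d : ℕ) : ∃ F : Finset (EuclideanSpace ℝ (Fin d)),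
    ∀ v : EuclideanSpace ℝ (Fin d), ‖v‖ = 1 → ∃ c ∈ F, dist v c < 1/2 := by
  have hc : IsCompact (Metric.sphere (0 : EuclideanSpace ℝ (Fin d)) 1) := isCompact_sphere _ _
  obtain ⟨F, hF⟩ := hc.elim_finite_subcover
    (fun c : EuclideanSpace ℝ (Fin d) => Metric.ball c (1/2))
    (fun c => Metric.isOpen_ball)
    (fun v hv => Set.mem_iUnion.mpr ⟨v, Metric.mem_ball_self (by norm_num)⟩)
  refine ⟨F, fun v hv => ?_⟩
  have : v ∈ Metric.sphere (0 : EuclideanSpace ℝ (Fin d)) 1 := by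
    simpa [mem_sphere_iff_norm] using hv
  have := hF this
  simpa using this

-- cone geometry lemma
lemma my_cone {d : ℕ} (v w : EuclideanSpace ℝ (Fin d)) (hv : v ≠ 0) (hw : w ≠ 0)
    (hclose : dist (‖v‖⁻¹ • v) (‖w‖⁻¹ • w) < 1) (hle : ‖v‖ ≤ ‖w‖) :
    ‖w - v‖ ≤ ‖w‖ := by
  have ha : (0:ℝ) < ‖v‖ := norm_pos_iff.mpr hv
  have hb : (0:ℝ) < ‖w‖ := norm_pos_iff.mpr hw
  have hn : ‖(‖v‖⁻¹ • v) - (‖w‖⁻¹ • w)‖ < 1 := by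
    rw [← dist_eq_norm]; exact hclose
  have hsq : ‖(‖v‖⁻¹ • v) - (‖w‖⁻¹ • w)‖^2 < 1 := by
    nlinarith [norm_nonneg ((‖v‖⁻¹ • v) - (‖w‖⁻¹ • w))]
  have hexp : ‖(‖v‖⁻¹ • v) - (‖w‖⁻¹ • w)‖^2
      = ‖(‖v‖⁻¹ • v)‖^2 - 2 * inner ℝ (‖v‖⁻¹ • v) (‖w‖⁻¹ • w) + ‖(‖w‖⁻¹ • w)‖^2 :=
    norm_sub_sq_real _ _
  have h1 : ‖(‖v‖⁻¹ • v)‖ = 1 := by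
    rw [norm_smul, norm_inv, norm_norm, inv_mul_cancel₀ (ne_of_gt ha)]
  have h2 : ‖(‖w‖⁻¹ • w)‖ = 1 := by
    rw [norm_smul, norm_inv, norm_norm, inv_mul_cancel₀ (ne_of_gt hb)]
  have hip : (inner ℝ (‖v‖⁻¹ • v) (‖w‖⁻¹ • w) : ℝ) = ‖v‖⁻¹ * ‖w‖⁻¹ * inner ℝ v w := by
    rw [real_inner_smul_left, real_inner_smul_right]; ring
  have hkey : (inner ℝ v w : ℝ) > ‖v‖ * ‖w‖ / 2 := by
    have h3 : ‖v‖⁻¹ * ‖w‖⁻¹ * inner ℝ v w > 1/2 := by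
      rw [hip] at hexp; rw [h1, h2] at hexp; nlinarith
    have := mul_lt_mul_of_pos_left h3 (mul_pos ha hb)
    field_simp at this ⊢
    nlinarith
  have hexp2 : ‖w - v‖^2 = ‖w‖^2 - 2 * inner ℝ w v + ‖v‖^2 := norm_sub_sq_real _ _
  have hcomm : (inner ℝ w v : ℝ) = inner ℝ v w := real_inner_comm _ _
  nlinarith [norm_nonneg (w - v)]

-- fiber bound
lemma my_fiber {n d k : ℕ} (X : Fin n → EuclideanSpace ℝ (Fin d)) (j : Fin n)
    (T : Finset (Fin n)) (hT : ∀ i ∈ T, knnEdge X k i j)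
    (hgeo : ∀ s ∈ T, ∀ m ∈ T, dist (X j) (X s) ≤ dist (X j) (X m) →
      dist (X m) (X s) ≤ dist (X m) (X j)) :
    T.card ≤ k := by
  rcases T.eq_empty_or_nonempty with h | h
  · simp [h]
  obtain ⟨m, hm, hmax⟩ := T.exists_max_image (fun i => dist (X j) (X i)) h
  have hmj : m ≠ j := (hT m hm).1
  have hjT : j ∉ T := fun hj => (hT j hj).1 rfl
  have hsub : insert j (T.erase m) ⊆
      Finset.univ.filter fun l => l ≠ m ∧ dist (X m) (X l) ≤ dist (X m) (X j) := by
    intro x hx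
    simp only [Finset.mem_insert, Finset.mem_erase] at hx
    simp only [Finset.mem_filter, Finset.mem_univ, true_and]
    rcases hx with rfl | ⟨hxm, hxT⟩
    · exact ⟨fun h => hmj h.symm, le_refl _⟩
    · exact ⟨hxm, hgeo x hxT m hm (hmax x hxT)⟩
  have hcard : T.card = (insert j (T.erase m)).card := by
    rw [Finset.card_insert_of_notMem (fun h => hjT (Finset.mem_of_mem_erase h)),
      Finset.card_erase_of_mem hm]
    have h1 : 1 ≤ T.card := Finset.card_pos.mpr h
    omega
  calc T.card = _ := hcard
    _ ≤ _ := Finset.card_le_card hsub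
    _ ≤ k := (hT m hm).2

/-- In the directed `k`-NN graph on points in general position in
`ℝ^d`, there is a constant `C_d` depending only on `d` such that every vertex has
in-degree at most `C_d k`, and hence total degree at most `(C_d + 1) k`. -/
theorem stmt_7 (d : ℕ) :
    ∃ C : ℕ, 0 < C ∧
      ∀ (n k : ℕ), 1 ≤ k →
        ∀ X : Fin n → EuclideanSpace ℝ (Fin d),
          (∀ i j i' j' : Fin n, i ≠ j → i' ≠ j' →
            dist (X i) (X j) = dist (X i') (X j') →
            ({i, j} : Set (Fin n)) = {i', j'}) →
          ∀ j : Fin n,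
            (Finset.univ.filter fun i => knnEdge X k i j).card ≤ C * k ∧
            (Finset.univ.filter fun i => knnEdge X k i j).card +
              (Finset.univ.filter fun i => knnEdge X k j i).card ≤ (C + 1) * k := by
  classical
  obtain ⟨F, hF⟩ := my_net d
  refine ⟨F.card + 1, Nat.succ_pos _, fun n k hk X _ j => ?_⟩
  set I := Finset.univ.filter fun i => knnEdge X k i j with hI
  -- classifier
  have hg : ∀ i : Fin n, ∃ c : Option (EuclideanSpace ℝ (Fin d)),
      (X i = X j → c = none) ∧
      (X i ≠ X j → ∃ u ∈ F, c = some u ∧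
        dist (‖X i - X j‖⁻¹ • (X i - X j)) u < 1/2) := by
    intro i
    by_cases h : X i = X j
    · exact ⟨none, fun _ => rfl, fun hne => absurd h hne⟩
    · have hy : X i - X j ≠ 0 := sub_ne_zero.mpr h
      have hnorm : ‖(‖X i - X j‖⁻¹ • (X i - X j))‖ = 1 := by
        rw [norm_smul, norm_inv, norm_norm,
          inv_mul_cancel₀ (norm_ne_zero_iff.mpr hy)]
      obtain ⟨c, hcF, hcd⟩ := hF _ hnorm
      exact ⟨some c, fun he => absurd he h, fun _ => ⟨c, hcF, rfl, hcd⟩⟩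
  choose g hg1 hg2 using hg
  set t : Finset (Option (EuclideanSpace ℝ (Fin d))) := insert none (F.image some) with ht
  have hmaps : ∀ i ∈ I, g i ∈ t := by
    intro i _
    by_cases h : X i = X j
    · rw [hg1 i h]; exact Finset.mem_insert_self _ _
    · obtain ⟨u, huF, hgu, _⟩ := hg2 i h
      rw [hgu]
      exact Finset.mem_insert_of_mem (Finset.mem_image_of_mem _ huF)
  have hfib : ∀ b ∈ t, (I.filter fun i => g i = b).card ≤ k := by
    intro b _
    apply my_fiber X j
    · intro i hi
      exact (Finset.mem_filter.mp (Finset.mem_filter.mp hi).1).2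
    · intro s hs m hm hdist
      have hgs : g s = b := (Finset.mem_filter.mp hs).2
      have hgm : g m = b := (Finset.mem_filter.mp hm).2
      by_cases hmj : X m = X j
      · have h0 : dist (X j) (X m) = 0 := by rw [dist_comm, hmj, dist_self]
        have h1 : dist (X j) (X s) = 0 := le_antisymm (h0 ▸ hdist) dist_nonneg
        calc dist (X m) (X s) ≤ dist (X m) (X j) + dist (X j) (X s) := dist_triangle _ _ _
          _ = dist (X m) (X j) := by rw [h1, add_zero]
      · obtain ⟨u, huF, hgu, hdu⟩ := hg2 m hmj
        have hsj : X s ≠ X j := by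
          intro he
          rw [hg1 s he] at hgs
          rw [hgu] at hgm
          rw [← hgs] at hgm
          exact Option.some_ne_none _ hgm
        obtain ⟨u', hu'F, hgu', hdu'⟩ := hg2 s hsj
        have huu : u' = u := by
          rw [hgu] at hgm; rw [hgu'] at hgs
          rw [← hgm] at hgs
          exact Option.some.inj hgs
        rw [huu] at hdu'
        have hclose : dist (‖X s - X j‖⁻¹ • (X s - X j)) (‖X m - X j‖⁻¹ • (X m - X j)) < 1 := by
          calc dist (‖X s - X j‖⁻¹ • (X s - X j)) (‖X m - X j‖⁻¹ • (X m - X j))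
              ≤ dist (‖X s - X j‖⁻¹ • (X s - X j)) u
                + dist u (‖X m - X j‖⁻¹ • (X m - X j)) := dist_triangle _ _ _
            _ < 1/2 + 1/2 := by rw [dist_comm u]; exact add_lt_add hdu' hdu
            _ = 1 := by norm_num
        have hle : ‖X s - X j‖ ≤ ‖X m - X j‖ := by
          rw [← dist_eq_norm, ← dist_eq_norm, dist_comm (X s), dist_comm (X m)]
          exact hdist
        have := my_cone (X s - X j) (X m - X j) (sub_ne_zero.mpr hsj)
          (sub_ne_zero.mpr hmj) hclose hle
        rw [sub_sub_sub_cancel_right] at this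
        rw [dist_eq_norm, dist_eq_norm]
        exact this
  have hin : I.card ≤ (F.card + 1) * k := by
    have := Finset.card_le_mul_card_image_of_maps_to hmaps k hfib
    have htc : t.card ≤ F.card + 1 := by
      calc t.card ≤ (F.image some).card + 1 := Finset.card_insert_le _ _
        _ ≤ F.card + 1 := by
            exact Nat.add_le_add_right (Finset.card_image_le) 1
    calc I.card ≤ k * t.card := this
      _ ≤ k * (F.card + 1) := Nat.mul_le_mul_left _ htc
      _ = (F.card + 1) * k := Nat.mul_comm _ _
  refine ⟨hin, ?_⟩
  have hout : (Finset.univ.filter fun i => knnEdge X k j i).card ≤ k := by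
    set O := Finset.univ.filter fun i => knnEdge X k j i with hO
    rcases O.eq_empty_or_nonempty with h | h
    · simp [h]
    obtain ⟨m, hm, hmax⟩ := O.exists_max_image (fun i => dist (X j) (X i)) h
    have hkm : knnEdge X k j m := (Finset.mem_filter.mp hm).2
    have hsub : O ⊆ Finset.univ.filter fun l =>
        l ≠ j ∧ dist (X j) (X l) ≤ dist (X j) (X m) := by
      intro x hx
      have hkx : knnEdge X k j x := (Finset.mem_filter.mp hx).2
      simp only [Finset.mem_filter, Finset.mem_univ, true_and]
      exact ⟨fun h' => hkx.1 h'.symm, hmax x hx⟩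
    calc O.card ≤ _ := Finset.card_le_card hsub
      _ ≤ k := hkm.2
  calc I.card + (Finset.univ.filter fun i => knnEdge X k j i).card
      ≤ (F.card + 1) * k + k := Nat.add_le_add hin hout
    _ = (F.card + 1 + 1) * k := by ring
end

section
/- Let $\psi: \mathbb{R}^p \to \mathbb{R}$ be a continuous positive definite function, let $\Lambda$ be the finite nonnegative Borel measure from Bochner's theorem with $\psi(x) = \int e^{-\iota x^\top \omega} d\Lambda(\omega)$, and set $\mathsf{K}(x,y) = \psi(x-y)$. Then for any two Borel probability measures $P, Q$ on $\mathbb{R}^p$ with characteristic functions $\phi_P, \phi_Q$, the MMD satisfies $\|\mu_P - \mu_Q\|_{\mathcal{K}}^2 = \int_{\mathbb{R}^p} |\phi_P(\omega) - \phi_Q(\omega)|^2 \, d\Lambda(\omega)$. -/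
open MeasureTheory Complex

set_option maxHeartbeats 1000000 in
/-- Corollary 4 of Sriperumbudur et al. (2010). For a continuous
positive definite function `ψ` on `ℝ^p` with Bochner measure `Λ`
(`ψ(x) = ∫ e^{-i xᵀω} dΛ(ω)`), kernel `K(x,y) = ψ(x-y)` with feature map `φ` into
its RKHS, and Borel probability measures `P, Q` with characteristic functions
`φ_P, φ_Q`, the MMD satisfies
`‖μ_P - μ_Q‖² = ∫ |φ_P(ω) - φ_Q(ω)|² dΛ(ω)`. -/
theorem stmt_14 {p : ℕ}
    (ψ : EuclideanSpace ℝ (Fin p) → ℝ) (hψcont : Continuous ψ)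
    (Λ : Measure (EuclideanSpace ℝ (Fin p))) [IsFiniteMeasure Λ]
    (hBochner : ∀ x, (ψ x : ℂ) =
      ∫ ω, Complex.exp (-Complex.I * ((inner ℝ x ω : ℝ) : ℂ)) ∂Λ)
    {H : Type*} [NormedAddCommGroup H] [InnerProductSpace ℝ H] [CompleteSpace H]
    (φ : EuclideanSpace ℝ (Fin p) → H)
    (hfeat : ∀ x y, ψ (x - y) = inner ℝ (φ x) (φ y))
    (P Q : Measure (EuclideanSpace ℝ (Fin p)))
    [IsProbabilityMeasure P] [IsProbabilityMeasure Q]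
    (hφP : Integrable φ P) (hφQ : Integrable φ Q)
    (μP μQ : H) (hμP : μP = ∫ y, φ y ∂P) (hμQ : μQ = ∫ y, φ y ∂Q)
    (charP charQ : EuclideanSpace ℝ (Fin p) → ℂ)
    (hcharP : ∀ ω, charP ω = ∫ y, Complex.exp (Complex.I * ((inner ℝ ω y : ℝ) : ℂ)) ∂P)
    (hcharQ : ∀ ω, charQ ω = ∫ y, Complex.exp (Complex.I * ((inner ℝ ω y : ℝ) : ℂ)) ∂Q) :
    ‖μP - μQ‖ ^ 2 = ∫ ω, ‖charP ω - charQ ω‖ ^ 2 ∂Λ := by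
  set e : EuclideanSpace ℝ (Fin p) → EuclideanSpace ℝ (Fin p) → ℂ :=
    fun ω x => Complex.exp (Complex.I * ((inner ℝ ω x : ℝ) : ℂ)) with he_def
  have hcomp : ∀ {X : Type} [TopologicalSpace X] {f g : X → EuclideanSpace ℝ (Fin p)},
      Continuous f → Continuous g → Continuous fun x => e (f x) (g x) := by
    intro X _ f g hf hg
    exact Complex.continuous_exp.comp (continuous_const.mul
      (Complex.continuous_ofReal.comp (hf.inner hg)))
  have he_norm : ∀ ω x, ‖e ω x‖ = 1 := by
    intro ω x
    simp only [he_def, mul_comm Complex.I, 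
      Complex.norm_exp_ofReal_mul_I]
  -- pointwise Bochner identity
  have hpt : ∀ x y ω : EuclideanSpace ℝ (Fin p),
      Complex.exp (-Complex.I * ((inner ℝ (x - y) ω : ℝ) : ℂ)) =
        (starRingEnd ℂ) (e ω x) * e ω y := by
    intro x y ω
    have hconj : (starRingEnd ℂ) (e ω x) =
        Complex.exp (-Complex.I * ((inner ℝ ω x : ℝ) : ℂ)) := by
      rw [he_def, ← Complex.exp_conj]
      congr 1
      simp [Complex.conj_I]
    rw [hconj, he_def, ← Complex.exp_add]
    congr 1
    have hinner : (inner ℝ (x - y) ω : ℝ) = (inner ℝ ω x : ℝ) - (inner ℝ ω y : ℝ) := by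
      rw [inner_sub_left, real_inner_comm x ω, real_inner_comm y ω]
    rw [hinner]
    push_cast
    ring
  -- continuity of characteristic-type functions
  have hchar_cont : ∀ (ν : Measure (EuclideanSpace ℝ (Fin p))), IsProbabilityMeasure ν →
      Continuous fun ω => ∫ y, e ω y ∂ν := by
    intro ν hν
    haveI := hν
    apply continuous_of_dominated (bound := fun _ => (1 : ℝ))
    · intro ω
      exact (hcomp continuous_const continuous_id).aestronglyMeasurable
    · intro ω
      exact ae_of_all _ fun y => le_of_eq (he_norm ω y)
    · exact integrable_const 1
    · refine ae_of_all _ fun y => ?_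
      exact hcomp continuous_id continuous_const
  have hchar_norm : ∀ (ν : Measure (EuclideanSpace ℝ (Fin p))), IsProbabilityMeasure ν →
      ∀ ω, ‖∫ y, e ω y ∂ν‖ ≤ 1 := by
    intro ν hν ω
    haveI := hν
    have h := norm_integral_le_integral_norm (μ := ν) (f := fun y => e ω y)
    have h2 : ∫ y, ‖e ω y‖ ∂ν = 1 := by
      rw [integral_congr_ae (ae_of_all _ fun y => he_norm ω y)]
      simp
    rw [h2] at h
    exact h
  -- the key lemma
  have key : ∀ (μ ν : Measure (EuclideanSpace ℝ (Fin p))),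
      IsProbabilityMeasure μ → IsProbabilityMeasure ν →
      Integrable φ μ → Integrable φ ν →
      ((inner ℝ (∫ x, φ x ∂μ) (∫ y, φ y ∂ν) : ℝ) : ℂ) =
        ∫ ω, (starRingEnd ℂ) (∫ x, e ω x ∂μ) * (∫ y, e ω y ∂ν) ∂Λ := by
    intro μ ν hμ hν hφμ hφν
    haveI := hμ; haveI := hν
    have h1 : (inner ℝ (∫ x, φ x ∂μ) (∫ y, φ y ∂ν) : ℝ) =
        ∫ x, ∫ y, ψ (x - y) ∂ν ∂μ := by
      rw [real_inner_comm, ← integral_inner hφμ]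
      refine integral_congr_ae (ae_of_all _ fun x => ?_)
      beta_reduce
      rw [real_inner_comm, ← integral_inner hφν]
      refine integral_congr_ae (ae_of_all _ fun y => ?_)
      beta_reduce
      rw [hfeat]
    have h2 : ∀ x, ((∫ y, ψ (x - y) ∂ν : ℝ) : ℂ) =
        ∫ y, ∫ ω, (starRingEnd ℂ) (e ω x) * e ω y ∂Λ ∂ν := by
      intro x
      refine Eq.trans (integral_ofReal).symm ?_
      refine integral_congr_ae (ae_of_all _ fun y => ?_)
      exact (hBochner (x - y)).trans
        (integral_congr_ae (ae_of_all _ fun ω => hpt x y ω))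
    -- Fubini, twice
    have hswap1 : ∀ x, ∫ y, ∫ ω, (starRingEnd ℂ) (e ω x) * e ω y ∂Λ ∂ν =
        ∫ ω, ∫ y, (starRingEnd ℂ) (e ω x) * e ω y ∂ν ∂Λ := by
      intro x
      apply integral_integral_swap
      have hm : AEStronglyMeasurable
          (Function.uncurry fun y ω => (starRingEnd ℂ) (e ω x) * e ω y) (ν.prod Λ) := by
        have hc : Continuous fun q : EuclideanSpace ℝ (Fin p) × EuclideanSpace ℝ (Fin p) =>
            (starRingEnd ℂ) (e q.2 x) * e q.2 q.1 :=
          (Complex.continuous_conj.comp (hcomp continuous_snd continuous_const)).mul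
            (hcomp continuous_snd continuous_fst)
        exact hc.aestronglyMeasurable
      refine Integrable.mono' (integrable_const (1 : ℝ)) hm (ae_of_all _ fun q => ?_)
      simp only [Function.uncurry, norm_mul, RCLike.norm_conj, he_norm, mul_one, le_refl]
    have hswap2 :
        ∫ x, ∫ ω, (starRingEnd ℂ) (e ω x) * (∫ y, e ω y ∂ν) ∂Λ ∂μ =
        ∫ ω, ∫ x, (starRingEnd ℂ) (e ω x) * (∫ y, e ω y ∂ν) ∂μ ∂Λ := by
      apply integral_integral_swap
      have hm : AEStronglyMeasurable
          (Function.uncurry fun x ω => (starRingEnd ℂ) (e ω x) * (∫ y, e ω y ∂ν))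
          (μ.prod Λ) := by
        have hc : Continuous fun q : EuclideanSpace ℝ (Fin p) × EuclideanSpace ℝ (Fin p) =>
            (starRingEnd ℂ) (e q.2 q.1) * (∫ y, e q.2 y ∂ν) :=
          (Complex.continuous_conj.comp (hcomp continuous_snd continuous_fst)).mul
            ((hchar_cont ν hν).comp continuous_snd)
        exact hc.aestronglyMeasurable
      refine Integrable.mono' (integrable_const (1 : ℝ)) hm (ae_of_all _ fun q => ?_)
      simp only [Function.uncurry, norm_mul, RCLike.norm_conj, he_norm, one_mul]
      exact hchar_norm ν hν q.2
    rw [h1]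
    calc ((∫ x, ∫ y, ψ (x - y) ∂ν ∂μ : ℝ) : ℂ)
        = ∫ x, ((∫ y, ψ (x - y) ∂ν : ℝ) : ℂ) ∂μ := (integral_ofReal).symm
      _ = ∫ x, ∫ ω, ∫ y, (starRingEnd ℂ) (e ω x) * e ω y ∂ν ∂Λ ∂μ := by
          refine integral_congr_ae (ae_of_all _ fun x => ?_)
          exact (h2 x).trans (hswap1 x)
      _ = ∫ x, ∫ ω, (starRingEnd ℂ) (e ω x) * (∫ y, e ω y ∂ν) ∂Λ ∂μ := by
          refine integral_congr_ae (ae_of_all _ fun x => ?_)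
          beta_reduce
          refine integral_congr_ae (ae_of_all _ fun ω => ?_)
          beta_reduce
          rw [integral_const_mul]
      _ = ∫ ω, ∫ x, (starRingEnd ℂ) (e ω x) * (∫ y, e ω y ∂ν) ∂μ ∂Λ := hswap2
      _ = ∫ ω, (starRingEnd ℂ) (∫ x, e ω x ∂μ) * (∫ y, e ω y ∂ν) ∂Λ := by
          refine integral_congr_ae (ae_of_all _ fun ω => ?_)
          beta_reduce
          rw [integral_mul_const, integral_conj]
  -- identify charP, charQ
  have hcP : charP = fun ω => ∫ y, e ω y ∂P := funext fun ω => hcharP ω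
  have hcQ : charQ = fun ω => ∫ y, e ω y ∂Q := funext fun ω => hcharQ ω
  have hcPc : Continuous charP := hcP ▸ hchar_cont P ‹_›
  have hcQc : Continuous charQ := hcQ ▸ hchar_cont Q ‹_›
  have hcPn : ∀ ω, ‖charP ω‖ ≤ 1 := fun ω => by rw [hcP]; exact hchar_norm P ‹_› ω
  have hcQn : ∀ ω, ‖charQ ω‖ ≤ 1 := fun ω => by rw [hcQ]; exact hchar_norm Q ‹_› ω
  -- integrability of products of chars
  have hintprod : ∀ f g : EuclideanSpace ℝ (Fin p) → ℂ, Continuous f → Continuous g →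
      (∀ ω, ‖f ω‖ ≤ 1) → (∀ ω, ‖g ω‖ ≤ 1) →
      Integrable (fun ω => (starRingEnd ℂ) (f ω) * g ω) Λ := by
    intro f g hf hg hfn hgn
    refine Integrable.mono' (integrable_const (1 : ℝ))
      ((Complex.continuous_conj.comp hf).mul hg).aestronglyMeasurable
      (ae_of_all _ fun ω => ?_)
    rw [norm_mul, RCLike.norm_conj]
    calc ‖f ω‖ * ‖g ω‖ ≤ 1 * 1 :=
          mul_le_mul (hfn ω) (hgn ω) (norm_nonneg _) zero_le_one
      _ = 1 := one_mul 1
  have hPP := hintprod charP charP hcPc hcPc hcPn hcPn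
  have hPQ := hintprod charP charQ hcPc hcQc hcPn hcQn
  have hQP := hintprod charQ charP hcQc hcPc hcQn hcPn
  have hQQ := hintprod charQ charQ hcQc hcQc hcQn hcQn
  -- pointwise expansion of the squared norm
  have hnorm_re : ∀ z : ℂ, ‖z‖ ^ 2 = ((starRingEnd ℂ) z * z).re := by
    intro z
    rw [mul_comm, Complex.mul_conj]
    simp [Complex.sq_norm]
  have hexp : ∀ ω, (starRingEnd ℂ) (charP ω - charQ ω) * (charP ω - charQ ω) =
      (starRingEnd ℂ) (charP ω) * charP ω - (starRingEnd ℂ) (charP ω) * charQ ω -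
      (starRingEnd ℂ) (charQ ω) * charP ω + (starRingEnd ℂ) (charQ ω) * charQ ω := by
    intro ω
    rw [map_sub]
    ring
  have hΔ : Integrable
      (fun ω => (starRingEnd ℂ) (charP ω - charQ ω) * (charP ω - charQ ω)) Λ := by
    have heq : (fun ω => (starRingEnd ℂ) (charP ω - charQ ω) * (charP ω - charQ ω)) =
        fun ω => (starRingEnd ℂ) (charP ω) * charP ω - (starRingEnd ℂ) (charP ω) * charQ ω -
          (starRingEnd ℂ) (charQ ω) * charP ω + (starRingEnd ℂ) (charQ ω) * charQ ω :=
      funext hexp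
    rw [heq]
    exact ((hPP.sub hPQ).sub hQP).add hQQ
  have kPP := key P P ‹_› ‹_› hφP hφP
  have kPQ := key P Q ‹_› ‹_› hφP hφQ
  have kQP := key Q P ‹_› ‹_› hφQ hφP
  have kQQ := key Q Q ‹_› ‹_› hφQ hφQ
  have hRHS : ∫ ω, ‖charP ω - charQ ω‖ ^ 2 ∂Λ =
      ((inner ℝ (∫ x, φ x ∂P) (∫ y, φ y ∂P) : ℝ) - (inner ℝ (∫ x, φ x ∂P) (∫ y, φ y ∂Q) : ℝ) -
       (inner ℝ (∫ x, φ x ∂Q) (∫ y, φ y ∂P) : ℝ) + (inner ℝ (∫ x, φ x ∂Q) (∫ y, φ y ∂Q) : ℝ)) := by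
    calc ∫ ω, ‖charP ω - charQ ω‖ ^ 2 ∂Λ
        = ∫ ω, ((starRingEnd ℂ) (charP ω - charQ ω) * (charP ω - charQ ω)).re ∂Λ := by
          refine integral_congr_ae (ae_of_all _ fun ω => ?_)
          beta_reduce
          rw [hnorm_re]
      _ = (∫ ω, (starRingEnd ℂ) (charP ω - charQ ω) * (charP ω - charQ ω) ∂Λ).re :=
          integral_re hΔ
      _ = (∫ ω, ((starRingEnd ℂ) (charP ω) * charP ω - (starRingEnd ℂ) (charP ω) * charQ ω -
            (starRingEnd ℂ) (charQ ω) * charP ω + (starRingEnd ℂ) (charQ ω) * charQ ω) ∂Λ).re := by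
          congr 1
          exact integral_congr_ae (ae_of_all _ fun ω => hexp ω)
      _ = ((∫ ω, (starRingEnd ℂ) (charP ω) * charP ω ∂Λ) -
           (∫ ω, (starRingEnd ℂ) (charP ω) * charQ ω ∂Λ) -
           (∫ ω, (starRingEnd ℂ) (charQ ω) * charP ω ∂Λ) +
           (∫ ω, (starRingEnd ℂ) (charQ ω) * charQ ω ∂Λ)).re := by
          have hI1 : Integrable (fun ω => (starRingEnd ℂ) (charP ω) * charP ω -
              (starRingEnd ℂ) (charP ω) * charQ ω) Λ := hPP.sub hPQ
          have hI2 : Integrable (fun ω => (starRingEnd ℂ) (charP ω) * charP ω -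
              (starRingEnd ℂ) (charP ω) * charQ ω -
              (starRingEnd ℂ) (charQ ω) * charP ω) Λ := hI1.sub hQP
          rw [integral_add hI2 hQQ, integral_sub hI1 hQP, integral_sub hPP hPQ]
      _ = _ := by
          simp only [hcP, hcQ]
          rw [← kPP, ← kPQ, ← kQP, ← kQQ]
          simp only [Complex.add_re, Complex.sub_re, Complex.ofReal_re]
  rw [hRHS, ← hμP, ← hμQ, ← real_inner_self_eq_norm_sq,
    inner_sub_left, inner_sub_right, inner_sub_right]
  ring
end
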